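/- (Closed-form APRIL, full input recovery.) Let the input image patches be x ∈ ℝ^{m×p}, the patch embedding be E_patch = W_p x with W_p ∈ ℝ^{c×m}, and the loss be L(Q,K,V,E_pos) = g(Qz, Kz, Vz) with z = E_patch + E_pos. Set M := ∇_{E_pos} L ∈ ℝ^{c×p} and B := Qᵀ(∇_Q L) + Kᵀ(∇_K L) + Vᵀ(∇_V L) ∈ ℝ^{c×c}. If M has full column rank p and W_p has full column rank m, then x is uniquely determined by (Q,K,V,E_pos,∇_Q L,∇_K L,∇_V L,M): namely x = (W_pᵀW_p)⁻¹ W_pᵀ ( ((MᵀM)⁻¹ Mᵀ B)ᵀ − E_pos ), and x is the only image whose patch embedding plus E_pos solves M zᵀ = B. -/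

import Mathlib

/-!
STATEMENT 0 (APRIL, gradients of the self-attention loss w.r.t. Q, K, V).
The loss is `L(Q,K,V,z) = g (Q*z, K*z, V*z)`.  If `g` has gradient matrices
`Gq, Gk, Gv` (w.r.t. its three arguments, via the Frobenius inner product)
at `(Q*z, K*z, V*z)`, then the gradient matrix of `Q ↦ L(Q,K,V,z)` is
`Gq * zᵀ`, and likewise `Gk * zᵀ` for `K` and `Gv * zᵀ` for `V`.
-/

open Matrix

attribute [local instance] Matrix.normedAddCommGroup Matrix.normedSpace

noncomputable section

/-- `G` is the gradient matrix of the scalar function `F` at `X`: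
it represents the Fréchet derivative of `F` at `X` via the Frobenius
inner product, `(dF)(H) = trace (Gᵀ * H)`. -/
def HasGradientMatrixAt {α β : Type*} [Fintype α] [Fintype β]
    (F : Matrix α β ℝ → ℝ) (G : Matrix α β ℝ) (X : Matrix α β ℝ) : Prop :=
  ∃ D : Matrix α β ℝ →L[ℝ] ℝ, HasFDerivAt F D X ∧ ∀ H, D H = Matrix.trace (Gᵀ * H)

/-- `(Gq, Gk, Gv)` are the gradient matrices of `g` with respect to its three
matrix arguments at the point `x = (q, k, v)`, i.e. they represent the Fréchet
derivative of `g` at `x` via the Frobenius inner product. -/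
def HasGradientTripleAt {d p : ℕ}
    (g : Matrix (Fin d) (Fin p) ℝ × Matrix (Fin d) (Fin p) ℝ × Matrix (Fin d) (Fin p) ℝ → ℝ)
    (Gq Gk Gv : Matrix (Fin d) (Fin p) ℝ)
    (x : Matrix (Fin d) (Fin p) ℝ × Matrix (Fin d) (Fin p) ℝ × Matrix (Fin d) (Fin p) ℝ) :
    Prop :=
  ∃ D : (Matrix (Fin d) (Fin p) ℝ × Matrix (Fin d) (Fin p) ℝ × Matrix (Fin d) (Fin p) ℝ) →L[ℝ] ℝ,
    HasFDerivAt g D x ∧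
    ∀ Hq Hk Hv, D (Hq, Hk, Hv) =
      Matrix.trace (Gqᵀ * Hq) + Matrix.trace (Gkᵀ * Hk) + Matrix.trace (Gvᵀ * Hv)

/-!
STATEMENT 7 (closed-form APRIL, full input recovery): with patches
`x ∈ ℝ^{m×p}`, patch embedding `E_patch = W_p x`, `z = E_patch + E_pos`,
`M := ∇_{E_pos} L` and `B := Qᵀ (∇_Q L) + Kᵀ (∇_K L) + Vᵀ (∇_V L)`, if `M`
has full column rank `p` and `W_p` has full column rank `m`, then
`x = (W_pᵀ W_p)⁻¹ W_pᵀ (((Mᵀ M)⁻¹ Mᵀ B)ᵀ − E_pos)` and `x` is the only image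
whose patch embedding plus `E_pos` solves `M zᵀ = B`.
-/
lemma trace_mul_single {α β : Type*} [Fintype α] [Fintype β] [DecidableEq α] [DecidableEq β]
    (G : Matrix α β ℝ) (i : α) (j : β) :
    Matrix.trace (Gᵀ * Matrix.single i j (1:ℝ)) = G i j := by
  simp [Matrix.trace, Matrix.diag, Matrix.mul_apply, Matrix.single, mul_ite, ite_and,
    Finset.sum_ite_eq, Finset.sum_ite_eq']

lemma gradMatrix_unique {α β : Type*} [Fintype α] [Fintype β] [DecidableEq α] [DecidableEq β]
    {F : Matrix α β ℝ → ℝ} {G G' X : Matrix α β ℝ}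
    (h : HasGradientMatrixAt F G X) (h' : HasGradientMatrixAt F G' X) : G = G' := by
  obtain ⟨D, hD, he⟩ := h
  obtain ⟨D', hD', he'⟩ := h'
  have hDD : D = D' := hD.unique hD'
  ext i j
  have h1 := he (Matrix.single i j (1:ℝ))
  have h2 := he' (Matrix.single i j (1:ℝ))
  rw [hDD, h2] at h1
  rw [_root_.trace_mul_single, _root_.trace_mul_single] at h1
  exact h1.symm

/-- right multiplication by a fixed matrix, as a linear map -/
def mulRightLM {a b e : Type*} [Fintype a] [Fintype b] [Fintype e]
    (z : Matrix b e ℝ) : Matrix a b ℝ →ₗ[ℝ] Matrix a e ℝ where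
  toFun H := H * z
  map_add' A B := Matrix.add_mul A B z
  map_smul' r A := Matrix.smul_mul r A z

/-- left multiplication by a fixed matrix, as a linear map -/
def mulLeftLM {a b e : Type*} [Fintype a] [Fintype b] [Fintype e]
    (A : Matrix a b ℝ) : Matrix b e ℝ →ₗ[ℝ] Matrix a e ℝ where
  toFun H := A * H
  map_add' X Y := Matrix.mul_add A X Y
  map_smul' r X := Matrix.mul_smul A r X


def mulRightCLM {a b e : ℕ} (z : Matrix (Fin b) (Fin e) ℝ) :
    Matrix (Fin a) (Fin b) ℝ →L[ℝ] Matrix (Fin a) (Fin e) ℝ :=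
  ⟨mulRightLM z, LinearMap.continuous_of_finiteDimensional _⟩

def mulLeftCLM {a b e : ℕ} (A : Matrix (Fin a) (Fin b) ℝ) :
    Matrix (Fin b) (Fin e) ℝ →L[ℝ] Matrix (Fin a) (Fin e) ℝ :=
  ⟨mulLeftLM A, LinearMap.continuous_of_finiteDimensional _⟩

lemma isUnit_of_rank_eq_card {n : ℕ} (A : Matrix (Fin n) (Fin n) ℝ) (h : A.rank = n) :
    IsUnit A := by
  rw [← Matrix.mulVec_surjective_iff_isUnit]
  have htop : LinearMap.range A.mulVecLin = ⊤ := by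
    apply Submodule.eq_top_of_finrank_eq
    rw [Matrix.rank] at h
    simp [h]
  intro y
  obtain ⟨v, hv⟩ := LinearMap.range_eq_top.mp htop y
  exact ⟨v, hv⟩

lemma mul_left_cancel_of_isUnit {n : ℕ} {α : Type*} [Fintype α]
    {A : Matrix (Fin n) (Fin n) ℝ} (hA : IsUnit A) {X Y : Matrix (Fin n) α ℝ}
    (h : A * X = A * Y) : X = Y := by
  have h1 : A⁻¹ * A = 1 := Matrix.nonsing_inv_mul _ ((Matrix.isUnit_iff_isUnit_det _).mp hA)
  calc X = (A⁻¹ * A) * X := by rw [h1, Matrix.one_mul]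
    _ = A⁻¹ * (A * X) := Matrix.mul_assoc _ _ _
    _ = A⁻¹ * (A * Y) := by rw [h]
    _ = (A⁻¹ * A) * Y := (Matrix.mul_assoc _ _ _).symm
    _ = Y := by rw [h1, Matrix.one_mul]

theorem april_full_input_recovery {p c d m : ℕ}
    (hp : 0 < p) (hc : 0 < c) (hd : 0 < d) (hm : 0 < m)
    (g : Matrix (Fin d) (Fin p) ℝ × Matrix (Fin d) (Fin p) ℝ × Matrix (Fin d) (Fin p) ℝ → ℝ)
    (hg : Differentiable ℝ g)
    (Q K V : Matrix (Fin d) (Fin c) ℝ)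
    (x : Matrix (Fin m) (Fin p) ℝ) (Wp : Matrix (Fin c) (Fin m) ℝ)
    (Epos : Matrix (Fin c) (Fin p) ℝ)
    (z : Matrix (Fin c) (Fin p) ℝ) (hz : z = Wp * x + Epos)
    (Gq Gk Gv : Matrix (Fin d) (Fin p) ℝ)
    (hgrad : HasGradientTripleAt g Gq Gk Gv (Q * z, K * z, V * z))
    (M : Matrix (Fin c) (Fin p) ℝ) (GQ GK GV : Matrix (Fin d) (Fin c) ℝ)
    (hM : HasGradientMatrixAt
      (fun E => g (Q * (Wp * x + E), K * (Wp * x + E), V * (Wp * x + E))) M Epos)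
    (hGQ : HasGradientMatrixAt (fun Q' => g (Q' * z, K * z, V * z)) GQ Q)
    (hGK : HasGradientMatrixAt (fun K' => g (Q * z, K' * z, V * z)) GK K)
    (hGV : HasGradientMatrixAt (fun V' => g (Q * z, K * z, V' * z)) GV V)
    (hrankM : M.rank = p) (hrankW : Wp.rank = m) :
    x = (Wpᵀ * Wp)⁻¹ * Wpᵀ *
        ((((Mᵀ * M)⁻¹ * Mᵀ * (Qᵀ * GQ + Kᵀ * GK + Vᵀ * GV))ᵀ) - Epos) ∧
    (∀ x' : Matrix (Fin m) (Fin p) ℝ,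
        M * (Wp * x' + Epos)ᵀ = Qᵀ * GQ + Kᵀ * GK + Vᵀ * GV → x' = x) := by
  obtain ⟨D, hD, he⟩ := hgrad
  -- gradient w.r.t. Q is Gq * zᵀ
  have hGQ' : HasGradientMatrixAt (fun Q' => g (Q' * z, K * z, V * z)) (Gq * zᵀ) Q := by
    have hL : HasFDerivAt (fun Q' : Matrix (Fin d) (Fin c) ℝ => (Q' * z, K * z, V * z))
        ((mulRightCLM z).prod
          ((0 : Matrix (Fin d) (Fin c) ℝ →L[ℝ] Matrix (Fin d) (Fin p) ℝ).prod 0)) Q := by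
      apply HasFDerivAt.prodMk
      · exact (mulRightCLM z).hasFDerivAt
      · exact (hasFDerivAt_const _ _).prodMk (hasFDerivAt_const _ _)
    refine ⟨_, hD.comp Q hL, fun H => ?_⟩
    show D (H * z, 0, 0) = _
    rw [he]
    simp only [Matrix.mul_zero, Matrix.trace_zero, add_zero]
    rw [transpose_mul, transpose_transpose, ← Matrix.mul_assoc, Matrix.trace_mul_cycle]
  have hGK' : HasGradientMatrixAt (fun K' => g (Q * z, K' * z, V * z)) (Gk * zᵀ) K := by
    have hL : HasFDerivAt (fun K' : Matrix (Fin d) (Fin c) ℝ => (Q * z, K' * z, V * z))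
        ((0 : Matrix (Fin d) (Fin c) ℝ →L[ℝ] Matrix (Fin d) (Fin p) ℝ).prod
          ((mulRightCLM z).prod 0)) K := by
      apply HasFDerivAt.prodMk
      · exact hasFDerivAt_const _ _
      · exact (mulRightCLM z).hasFDerivAt.prodMk (hasFDerivAt_const _ _)
    refine ⟨_, hD.comp K hL, fun H => ?_⟩
    show D (0, H * z, 0) = _
    rw [he]
    simp only [Matrix.mul_zero, Matrix.trace_zero, add_zero, zero_add]
    rw [transpose_mul, transpose_transpose, ← Matrix.mul_assoc, Matrix.trace_mul_cycle]
  have hGV' : HasGradientMatrixAt (fun V' => g (Q * z, K * z, V' * z)) (Gv * zᵀ) V := by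
    have hL : HasFDerivAt (fun V' : Matrix (Fin d) (Fin c) ℝ => (Q * z, K * z, V' * z))
        ((0 : Matrix (Fin d) (Fin c) ℝ →L[ℝ] Matrix (Fin d) (Fin p) ℝ).prod
          ((0 : Matrix (Fin d) (Fin c) ℝ →L[ℝ] Matrix (Fin d) (Fin p) ℝ).prod
            (mulRightCLM z))) V := by
      apply HasFDerivAt.prodMk
      · exact hasFDerivAt_const _ _
      · exact (hasFDerivAt_const _ _).prodMk (mulRightCLM z).hasFDerivAt
    refine ⟨_, hD.comp V hL, fun H => ?_⟩
    show D (0, 0, H * z) = _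
    rw [he]
    simp only [Matrix.mul_zero, Matrix.trace_zero, zero_add]
    rw [transpose_mul, transpose_transpose, ← Matrix.mul_assoc, Matrix.trace_mul_cycle]
  -- gradient w.r.t. Epos is Qᵀ Gq + Kᵀ Gk + Vᵀ Gv
  have hM' : HasGradientMatrixAt
      (fun E => g (Q * (Wp * x + E), K * (Wp * x + E), V * (Wp * x + E)))
      (Qᵀ * Gq + Kᵀ * Gk + Vᵀ * Gv) Epos := by
    have hfun : ∀ (A : Matrix (Fin d) (Fin c) ℝ),
        (fun E : Matrix (Fin c) (Fin p) ℝ => A * (Wp * x + E)) =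
        (fun E => mulLeftCLM A E + A * (Wp * x)) := by
      intro A; funext E
      show A * (Wp * x + E) = A * E + A * (Wp * x)
      rw [Matrix.mul_add, add_comm]
    have hcomp : ∀ (A : Matrix (Fin d) (Fin c) ℝ),
        HasFDerivAt (fun E : Matrix (Fin c) (Fin p) ℝ => A * (Wp * x + E))
          (mulLeftCLM A) Epos := by
      intro A
      rw [hfun A]
      exact (mulLeftCLM A).hasFDerivAt.add_const _
    have hL : HasFDerivAt
        (fun E : Matrix (Fin c) (Fin p) ℝ =>
          (Q * (Wp * x + E), K * (Wp * x + E), V * (Wp * x + E)))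
        ((mulLeftCLM Q).prod
          ((mulLeftCLM K).prod
            (mulLeftCLM V))) Epos :=
      (hcomp Q).prodMk ((hcomp K).prodMk (hcomp V))
    have hpt : (Q * (Wp * x + Epos), K * (Wp * x + Epos), V * (Wp * x + Epos)) =
        (Q * z, K * z, V * z) := by rw [hz]
    refine ⟨_, (hpt ▸ hD).comp Epos hL, fun H => ?_⟩
    show D (Q * H, K * H, V * H) = _
    rw [he]
    simp only [transpose_add, transpose_mul, transpose_transpose, Matrix.add_mul,
        Matrix.trace_add, Matrix.mul_assoc]
  have hGQeq : GQ = Gq * zᵀ := gradMatrix_unique hGQ hGQ'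
  have hGKeq : GK = Gk * zᵀ := gradMatrix_unique hGK hGK'
  have hGVeq : GV = Gv * zᵀ := gradMatrix_unique hGV hGV'
  have hMeq : M = Qᵀ * Gq + Kᵀ * Gk + Vᵀ * Gv := gradMatrix_unique hM hM'
  -- B = M * zᵀ
  have hB : Qᵀ * GQ + Kᵀ * GK + Vᵀ * GV = M * zᵀ := by
    rw [hGQeq, hGKeq, hGVeq, hMeq, Matrix.add_mul, Matrix.add_mul,
      Matrix.mul_assoc, Matrix.mul_assoc, Matrix.mul_assoc]
  have hMtM : IsUnit (Mᵀ * M) := by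
    apply isUnit_of_rank_eq_card
    rw [Matrix.rank_transpose_mul_self, hrankM]
  have hWtW : IsUnit (Wpᵀ * Wp) := by
    apply isUnit_of_rank_eq_card
    rw [Matrix.rank_transpose_mul_self, hrankW]
  have hMinv : (Mᵀ * M)⁻¹ * (Mᵀ * M) = 1 :=
    Matrix.nonsing_inv_mul _ ((Matrix.isUnit_iff_isUnit_det _).mp hMtM)
  have hWinv : (Wpᵀ * Wp)⁻¹ * (Wpᵀ * Wp) = 1 :=
    Matrix.nonsing_inv_mul _ ((Matrix.isUnit_iff_isUnit_det _).mp hWtW)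
  -- recover zᵀ
  have hzT : (Mᵀ * M)⁻¹ * Mᵀ * (Qᵀ * GQ + Kᵀ * GK + Vᵀ * GV) = zᵀ := by
    rw [hB, Matrix.mul_assoc, ← Matrix.mul_assoc Mᵀ M zᵀ, ← Matrix.mul_assoc, hMinv,
      Matrix.one_mul]
  constructor
  · rw [hzT, transpose_transpose, hz, add_sub_cancel_right, ← Matrix.mul_assoc,
      Matrix.mul_assoc (Wpᵀ * Wp)⁻¹ Wpᵀ Wp, hWinv, Matrix.one_mul]
  · intro x' hx'
    rw [hB] at hx'
    have h1 : (Mᵀ * M) * (Wp * x' + Epos)ᵀ = (Mᵀ * M) * zᵀ := by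
      rw [Matrix.mul_assoc, Matrix.mul_assoc, hx']
    have h2 : (Wp * x' + Epos)ᵀ = zᵀ := mul_left_cancel_of_isUnit hMtM h1
    have h3 : Wp * x' + Epos = z := by
      have := congrArg Matrix.transpose h2
      simpa using this
    have h4 : Wp * x' = Wp * x := by
      rw [hz] at h3
      exact add_right_cancel h3
    have h5 : (Wpᵀ * Wp) * x' = (Wpᵀ * Wp) * x := by
      rw [Matrix.mul_assoc, Matrix.mul_assoc, h4]
    exact mul_left_cancel_of_isUnit hWtW h5
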